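/- Let A ∈ ℝ^{m×n} with rows a_1, ..., a_m, let I ⊆ {1,...,m}, and let D_I be the diagonal matrix with (D_I)_{ii} = 0 for i ∈ I and (D_I)_{ii} = 1 for i ∉ I. Fix k ∈ I with a_k ≠ 0 and suppose a_k lies in the orthogonal complement of the nullspace of D_I A, i.e., a_k ∈ 𝒩(D_I A)^⊥, and that D_I A ≠ 0. Let M = m − |I| and let c > 0 be a constant such that for all j ∉ I, |⟨a_j, a_k⟩| ≤ c · ‖a_k‖₂ / √M. Then the smallest nonzero singular value σ_K = min{σ_l : σ_l ≠ 0} of D_I A satisfies 0 < σ_K ≤ c. -/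

import Mathlib

open Matrix

/-- The singular values of a real `m × n` matrix `B`, listed in decreasing order
`singularValues B 0 ≥ singularValues B 1 ≥ …` (`0`-indexed): namely, the square roots of
the eigenvalues of `Bᵀ B` (which over `ℝ` is `Bᴴ B`), sorted decreasingly. -/
noncomputable def singularValues {m n : ℕ} (B : Matrix (Fin m) (Fin n) ℝ) : Fin n → ℝ :=
  fun k => Real.sqrt
    ((Matrix.isHermitian_conjTranspose_mul_self B).eigenvalues
      (Tuple.sort (Matrix.isHermitian_conjTranspose_mul_self B).eigenvalues k.rev))

/-- The diagonal matrix `D_I` with `(D_I)_{ii} = 0` for `i ∈ I` and `(D_I)_{ii} = 1` for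
`i ∉ I`. -/
def DI {m : ℕ} (I : Finset (Fin m)) : Matrix (Fin m) (Fin m) ℝ :=
  Matrix.diagonal fun i => if i ∈ I then 0 else 1

lemma inner_eq_dot {n : ℕ} (x y : EuclideanSpace ℝ (Fin n)) :
    (inner ℝ x y : ℝ) = (x : Fin n → ℝ) ⬝ᵥ (y : Fin n → ℝ) := by
  simp [PiLp.inner_apply, RCLike.inner_apply, dotProduct, mul_comm]

lemma dot_expand {n : ℕ} (b : OrthonormalBasis (Fin n) ℝ (EuclideanSpace ℝ (Fin n)))
    (x y : Fin n → ℝ) :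
    x ⬝ᵥ y = ∑ i, (x ⬝ᵥ (b i : Fin n → ℝ)) * (y ⬝ᵥ (b i : Fin n → ℝ)) := by
  have h := b.sum_inner_mul_inner (WithLp.toLp 2 x) (WithLp.toLp 2 y)
  simp only [inner_eq_dot, WithLp.ofLp_toLp] at h
  rw [← h]
  congr 1; ext i
  rw [dotProduct_comm ((b i : Fin n → ℝ)) y]

lemma ite_sum_card {m : ℕ} (I : Finset (Fin m)) (K : ℝ) :
    (∑ j : Fin m, if j ∈ I then (0:ℝ) else K) = ((m - I.card : ℕ) : ℝ) * K := by
  rw [Finset.sum_ite, Finset.sum_const, Finset.sum_const, smul_zero, zero_add, nsmul_eq_mul]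
  congr 2
  rw [Finset.filter_not, Finset.filter_mem_eq_inter, Finset.univ_inter,
    Finset.card_sdiff_of_subset (Finset.subset_univ I), Finset.card_univ, Fintype.card_fin]


/-- **Removal of weakly correlated rows.**
Let `A ∈ ℝ^{m×n}` with rows `a_j = A j`, `I ⊆ [m]`, and fix `k ∈ I` with `a_k ≠ 0` and
`a_k ∈ 𝒩(D_I A)^⊥` (i.e. `a_k` is orthogonal to every vector in the nullspace of `D_I A`),
and `D_I A ≠ 0`.  If `|⟨a_j, a_k⟩| ≤ c ‖a_k‖₂ / √M` for all `j ∉ I`, where `M = m - |I|`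
and `c > 0`, then the smallest nonzero singular value `σ_K = min {σ_l : σ_l ≠ 0}` of
`D_I A` satisfies `0 < σ_K ≤ c`. -/
theorem removal_of_weakly_correlated_rows {m n : ℕ} (A : Matrix (Fin m) (Fin n) ℝ)
    (I : Finset (Fin m)) (k : Fin m) (hkI : k ∈ I) (hak : A k ≠ 0)
    (hperp : ∀ x : Fin n → ℝ, (DI I * A) *ᵥ x = 0 → A k ⬝ᵥ x = 0)
    (hDA : DI I * A ≠ 0) (c : ℝ) (hc : 0 < c)
    (hcorr : ∀ j : Fin m, j ∉ I →
      |A j ⬝ᵥ A k| ≤ c * Real.sqrt (A k ⬝ᵥ A k) / Real.sqrt ((m - I.card : ℕ) : ℝ)) :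
    0 < sInf {σ : ℝ | ∃ l : Fin n, σ = singularValues (DI I * A) l ∧ σ ≠ 0} ∧
      sInf {σ : ℝ | ∃ l : Fin n, σ = singularValues (DI I * A) l ∧ σ ≠ 0} ≤ c := by
  set B := DI I * A with hB
  set μ := (Matrix.isHermitian_conjTranspose_mul_self B).eigenvalues with hμ
  set b := (Matrix.isHermitian_conjTranspose_mul_self B).eigenvectorBasis with hb
  set G := Bᵀ * B with hG
  -- rows of B
  have hBrow : ∀ (x : Fin n → ℝ) (j : Fin m),
      (B *ᵥ x) j = if j ∈ I then 0 else A j ⬝ᵥ x := by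
    intro x j
    rw [hB, ← mulVec_mulVec]
    simp [DI, mulVec_diagonal, mulVec]
  have hIc : ∃ j, j ∉ I := by
    by_contra h
    push_neg at h
    apply hDA
    ext j l
    rw [hB]
    simp [DI, Matrix.diagonal_mul, h j]
  have hMpos : 0 < ((m - I.card : ℕ) : ℝ) := by
    obtain ⟨j, hj⟩ := hIc
    have h1 : I.card < m := by
      have hne : I ≠ Finset.univ := fun h => hj (by rw [h]; exact Finset.mem_univ j)
      have := Finset.card_lt_card (Finset.ssubset_univ_iff.2 hne)
      simpa using this
    have h2 : 0 < (m - I.card : ℕ) := by omega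
    exact_mod_cast h2
  set s := A k ⬝ᵥ A k with hs
  have hs0 : 0 ≤ s := Finset.sum_nonneg fun i _ => mul_self_nonneg _
  have hspos : 0 < s := by
    rcases hs0.lt_or_eq with h | h
    · exact h
    · exact absurd (dotProduct_self_eq_zero.mp h.symm) hak
  have hGsym : Gᵀ = G := by
    rw [hG, transpose_mul, transpose_transpose]
  have hsym : ∀ x y : Fin n → ℝ, x ⬝ᵥ (G *ᵥ y) = (G *ᵥ x) ⬝ᵥ y := by
    intro x y
    rw [dotProduct_mulVec]
    nth_rewrite 1 [← hGsym]
    rw [vecMul_transpose]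
  have hBB : ∀ x : Fin n → ℝ, (B *ᵥ x) ⬝ᵥ (B *ᵥ x) = x ⬝ᵥ (G *ᵥ x) := by
    intro x
    calc (B *ᵥ x) ⬝ᵥ (B *ᵥ x) = (x ᵥ* Bᵀ) ⬝ᵥ (B *ᵥ x) := by rw [vecMul_transpose]
      _ = x ⬝ᵥ (Bᵀ *ᵥ (B *ᵥ x)) := (dotProduct_mulVec _ _ _).symm
      _ = x ⬝ᵥ (G *ᵥ x) := by rw [mulVec_mulVec, ← hG]
  have heig : ∀ i, G *ᵥ (b i : Fin n → ℝ) = μ i • (b i : Fin n → ℝ) :=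
    fun i => (Matrix.isHermitian_conjTranspose_mul_self B).mulVec_eigenvectorBasis i
  have hortho : ∀ i, ((b i : Fin n → ℝ)) ⬝ᵥ ((b i : Fin n → ℝ)) = 1 := by
    intro i
    rw [← inner_eq_dot]
    simpa using orthonormal_iff_ite.mp b.orthonormal i i
  have hμnonneg : ∀ i, 0 ≤ μ i := by
    intro i
    have h1 : (b i : Fin n → ℝ) ⬝ᵥ (G *ᵥ (b i : Fin n → ℝ)) = μ i := by
      rw [heig i, dotProduct_smul, hortho i]; simp
    have h2 : 0 ≤ (B *ᵥ (b i : Fin n → ℝ)) ⬝ᵥ (B *ᵥ (b i : Fin n → ℝ)) :=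
      Finset.sum_nonneg fun _ _ => mul_self_nonneg _
    rw [hBB, h1] at h2
    exact h2
  set ci := fun i => A k ⬝ᵥ (b i : Fin n → ℝ) with hci
  have hzero : ∀ i, μ i = 0 → ci i = 0 := by
    intro i h0
    have hBv : B *ᵥ (b i : Fin n → ℝ) = 0 := by
      have : (B *ᵥ (b i : Fin n → ℝ)) ⬝ᵥ (B *ᵥ (b i : Fin n → ℝ)) = 0 := by
        rw [hBB, heig i, h0, zero_smul, dotProduct_zero]
      exact dotProduct_self_eq_zero.mp this
    exact hperp _ hBv
  have hparse : s = ∑ i, ci i ^ 2 := by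
    rw [hs, dot_expand b]
    congr 1; ext i; rw [sq]
  have hqexp : A k ⬝ᵥ (G *ᵥ A k) = ∑ i, μ i * ci i ^ 2 := by
    rw [dot_expand b (A k) (G *ᵥ A k)]
    congr 1; ext i
    have h3 : (G *ᵥ A k) ⬝ᵥ (b i : Fin n → ℝ) = μ i * ci i := by
      rw [dotProduct_comm, hsym, heig i, smul_dotProduct, smul_eq_mul,
        dotProduct_comm]
    rw [h3]; ring
  have hq : A k ⬝ᵥ (G *ᵥ A k) ≤ c ^ 2 * s := by
    rw [← hBB]
    have hterm : ∀ j : Fin m, ((B *ᵥ A k) j) * ((B *ᵥ A k) j) ≤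
        if j ∈ I then 0 else c ^ 2 * s / ((m - I.card : ℕ) : ℝ) := by
      intro j
      rw [hBrow]
      by_cases hj : j ∈ I
      · simp [hj]
      · simp only [hj, if_false]
        have h1 := hcorr j hj
        have h3 := mul_self_le_mul_self (abs_nonneg (A j ⬝ᵥ A k)) h1
        rw [abs_mul_abs_self] at h3
        have h4 : (c * Real.sqrt s / Real.sqrt ((m - I.card : ℕ) : ℝ)) *
            (c * Real.sqrt s / Real.sqrt ((m - I.card : ℕ) : ℝ)) =
            c ^ 2 * s / ((m - I.card : ℕ) : ℝ) := by
          rw [div_mul_div_comm, Real.mul_self_sqrt hMpos.le]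
          congr 1
          rw [mul_mul_mul_comm, ← sq, ← sq, Real.sq_sqrt hs0]
        linarith [h3, h4.le, h4.ge]
    calc (B *ᵥ A k) ⬝ᵥ (B *ᵥ A k)
        ≤ ∑ j, if j ∈ I then 0 else c ^ 2 * s / ((m - I.card : ℕ) : ℝ) :=
          Finset.sum_le_sum fun j _ => hterm j
      _ = ((m - I.card : ℕ) : ℝ) * (c ^ 2 * s / ((m - I.card : ℕ) : ℝ)) := ite_sum_card _ _
      _ = c ^ 2 * s := by field_simp
  -- find index with small nonzero eigenvalue
  have hex : ∃ i, μ i ≠ 0 ∧ μ i ≤ c ^ 2 := by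
    by_contra h
    push_neg at h
    have hciex : ∃ i, ci i ≠ 0 := by
      by_contra h2
      push_neg at h2
      have : s = 0 := by
        rw [hparse]; exact Finset.sum_eq_zero fun i _ => by rw [h2 i]; ring
      linarith
    obtain ⟨i₀, hi₀⟩ := hciex
    have hμi₀ : μ i₀ ≠ 0 := fun h0 => hi₀ (hzero i₀ h0)
    have hstrict : c ^ 2 * s < ∑ i, μ i * ci i ^ 2 := by
      have : c ^ 2 * s = ∑ i, c ^ 2 * ci i ^ 2 := by
        rw [hparse, Finset.mul_sum]
      rw [this]
      apply Finset.sum_lt_sum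
      · intro i _
        by_cases h0 : μ i = 0
        · rw [hzero i h0]; ring_nf; rfl
        · exact mul_le_mul_of_nonneg_right (h i h0).le (sq_nonneg _)
      · exact ⟨i₀, Finset.mem_univ _,
          mul_lt_mul_of_pos_right (h i₀ hμi₀) (by positivity)⟩
    rw [← hqexp] at hstrict
    linarith
  obtain ⟨i₀, hμne, hμle⟩ := hex
  -- realize as singular value
  set S := {σ : ℝ | ∃ l : Fin n, σ = singularValues B l ∧ σ ≠ 0} with hS
  have hσpos : 0 < Real.sqrt (μ i₀) := Real.sqrt_pos.2 ((hμnonneg i₀).lt_of_ne (Ne.symm hμne))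
  have hmem : Real.sqrt (μ i₀) ∈ S := by
    refine ⟨((Tuple.sort μ).symm i₀).rev, ?_, ne_of_gt hσpos⟩
    show Real.sqrt (μ i₀) =
      Real.sqrt (μ (Tuple.sort μ (((Tuple.sort μ).symm i₀).rev.rev)))
    rw [Fin.rev_rev, Equiv.apply_symm_apply]
  have hSfin : S.Finite :=
    Set.Finite.subset (Set.finite_range (singularValues B)) (fun σ ⟨l, hl, _⟩ => ⟨l, hl.symm⟩)
  have hSne : S.Nonempty := ⟨_, hmem⟩
  have hinf_mem : sInf S ∈ S := hSne.csInf_mem hSfin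
  constructor
  · obtain ⟨l, hl, hne⟩ := hinf_mem
    have : 0 ≤ singularValues B l := Real.sqrt_nonneg _
    rcases this.lt_or_eq with h | h
    · rw [hl]; exact h
    · exact absurd (hl.trans h.symm) hne
  · calc sInf S ≤ Real.sqrt (μ i₀) := csInf_le hSfin.bddBelow hmem
      _ ≤ Real.sqrt (c ^ 2) := Real.sqrt_le_sqrt hμle
      _ = c := by rw [Real.sqrt_sq hc.le]
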